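/- Let F be a field of characteristic ≠ 2 and u, v ∈ F \ {0} with u/v = ε² for some ε ∈ F. Then the 4×4 matrix Γ with rows (1, 0, 0, (u − vε)/2), (0, 1, 0, (1 − ε)/2), (0, 0, 1, 0), (0, 0, 0, ε) satisfies, for all 1 ≤ r ≤ 4 and 1 ≤ i < k ≤ 4, the equation 2γ_{ir}γ_{kr} + γ_{kr}² s_{ki} = ∑_{j<r} t_{rj}(γ_{kj}γ_{kr} s_{ki} + γ_{kj}γ_{ir} + γ_{ij}γ_{kr}), where T has rows (0,0,0,0), (0,0,0,0), (1,1,0,0), (u,1,0,0) and S has rows (0,0,0,0), (0,0,0,0), (1,1,0,0), (v,1,0,0). Hence Γ defines a graded isomorphism A(T) → A(S). -/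

import Mathlib

open MvPolynomial

noncomputable section

variable (F : Type) [Field F]

/-- The defining relations of the nil graded algebra `A(T)`. -/
def relSet {n : ℕ} (T : Matrix (Fin n) (Fin n) F) : Set (MvPolynomial (Fin n) F) :=
  { p | ∃ i : Fin n,
      p = X i ^ 2 - ∑ j ∈ Finset.univ.filter (fun j => j < i), C (T i j) * X j * X i }

/-- The nil graded algebra `A(T)` associated to a strictly lower triangular matrix `T`. -/
abbrev NTAlg {n : ℕ} (T : Matrix (Fin n) (Fin n) F) : Type :=
  MvPolynomial (Fin n) F ⧸ Ideal.span (relSet F T)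

/-- The generators `X i` of `A(T)`. -/
def NTgen {n : ℕ} (T : Matrix (Fin n) (Fin n) F) (i : Fin n) : NTAlg F T :=
  Ideal.Quotient.mk _ (X i)

/-- An algebra isomorphism is degree preserving iff it (and its inverse) maps the span
of the degree-2 generators into the span of the degree-2 generators. -/
def IsGradedIso {n : ℕ} {T S : Matrix (Fin n) (Fin n) F}
    (e : NTAlg F T ≃ₐ[F] NTAlg F S) : Prop :=
  (∀ j, e (NTgen F T j) ∈ Submodule.span F (Set.range (NTgen F S))) ∧
  (∀ j, e.symm (NTgen F S j) ∈ Submodule.span F (Set.range (NTgen F T)))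

/-- `A(T)` and `A(S)` are isomorphic in the category 𝒩𝒯. -/
def NTIso {n : ℕ} (T S : Matrix (Fin n) (Fin n) F) : Prop :=
  ∃ e : NTAlg F T ≃ₐ[F] NTAlg F S, IsGradedIso F e

/-- A matrix is strictly lower triangular. -/
def SLTM {n : ℕ} (T : Matrix (Fin n) (Fin n) F) : Prop :=
  ∀ i j : Fin n, i ≤ j → T i j = 0

/-- The key system of equations (Theorem `theo-Key-condition`). -/
def KeyEq {n : ℕ} (T S Γ : Matrix (Fin n) (Fin n) F) : Prop :=
  ∀ r i k : Fin n, i < k →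
    2 * Γ i r * Γ k r + Γ k r ^ 2 * S k i =
      ∑ j ∈ Finset.univ.filter (fun j => j < r),
        T r j * (Γ k j * Γ k r * S k i + Γ k j * Γ i r + Γ i j * Γ k r)

/-! ### Auxiliary machinery -/


variable {F}

/-- The `i`-th defining relation of `A(M)`. -/
def relp {n : ℕ} (M : Matrix (Fin n) (Fin n) F) (i : Fin n) : MvPolynomial (Fin n) F :=
  X i ^ 2 - ∑ j ∈ Finset.univ.filter (fun j => j < i), C (M i j) * X j * X i

lemma relp_mem {n : ℕ} (M : Matrix (Fin n) (Fin n) F) (i : Fin n) : relp M i ∈ relSet F M :=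
  ⟨i, rfl⟩

lemma relSet_forall {n : ℕ} (M : Matrix (Fin n) (Fin n) F) {P : MvPolynomial (Fin n) F → Prop}
    (h : ∀ i, P (relp M i)) : ∀ r ∈ relSet F M, P r := by
  rintro r ⟨i, rfl⟩; exact h i

/-- Lift a substitution to an algebra map on the quotients. -/
def NTlift {n : ℕ} (T S : Matrix (Fin n) (Fin n) F) (p : Fin n → MvPolynomial (Fin n) F)
    (h : ∀ i, (aeval p) (relp T i) ∈ Ideal.span (relSet F S)) :
    NTAlg F T →ₐ[F] NTAlg F S :=
  Ideal.Quotient.liftₐ _ ((Ideal.Quotient.mkₐ F _).comp (aeval p)) (by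
    intro a ha
    have hsub : Ideal.span (relSet F T) ≤
        Ideal.comap (aeval p : MvPolynomial (Fin n) F →ₐ[F] MvPolynomial (Fin n) F)
          (Ideal.span (relSet F S)) := by
      rw [Ideal.span_le]
      exact relSet_forall T h
    exact Ideal.Quotient.eq_zero_iff_mem.mpr (hsub ha))

lemma NTlift_mk {n : ℕ} (T S : Matrix (Fin n) (Fin n) F) (p : Fin n → MvPolynomial (Fin n) F)
    (h : ∀ i, (aeval p) (relp T i) ∈ Ideal.span (relSet F S)) (r : MvPolynomial (Fin n) F) :
    NTlift T S p h (Ideal.Quotient.mk _ r) = Ideal.Quotient.mk _ ((aeval p) r) :=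
  rfl

lemma NTlift_gen {n : ℕ} (T S : Matrix (Fin n) (Fin n) F) (p : Fin n → MvPolynomial (Fin n) F)
    (h : ∀ i, (aeval p) (relp T i) ∈ Ideal.span (relSet F S)) (i : Fin n) :
    NTlift T S p h (NTgen F T i) = Ideal.Quotient.mk _ (p i) := by
  rw [NTgen, NTlift_mk, aeval_X]

lemma smul_mk {n : ℕ} (S : Matrix (Fin n) (Fin n) F) (r : F) (x : MvPolynomial (Fin n) F) :
    r • (Ideal.Quotient.mk (Ideal.span (relSet F S)) x) = Ideal.Quotient.mk _ (C r * x) := by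
  show r • Ideal.Quotient.mkₐ F _ x = Ideal.Quotient.mkₐ F _ (C r * x)
  rw [← map_smul, smul_eq_C_mul]

/-- The four relations for our particular matrices. -/
lemma relp_explicit (w : F) :
    relp !![(0:F),0,0,0; 0,0,0,0; 1,1,0,0; w,1,0,0] 0 = X 0 ^ 2 ∧
    relp !![(0:F),0,0,0; 0,0,0,0; 1,1,0,0; w,1,0,0] 1 = X 1 ^ 2 ∧
    relp !![(0:F),0,0,0; 0,0,0,0; 1,1,0,0; w,1,0,0] 2 = X 2 ^ 2 - (X 0 * X 2 + X 1 * X 2) ∧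
    relp !![(0:F),0,0,0; 0,0,0,0; 1,1,0,0; w,1,0,0] 3
      = X 3 ^ 2 - (C w * X 0 * X 3 + X 1 * X 3) := by
  refine ⟨?_, ?_, ?_, ?_⟩
  · rw [relp, Finset.sum_filter, Fin.sum_univ_four]
    norm_num [Matrix.cons_val_zero, Matrix.cons_val_one, Matrix.head_cons]
  · rw [relp, Finset.sum_filter, Fin.sum_univ_four]
    norm_num [Matrix.cons_val_zero, Matrix.cons_val_one, Matrix.head_cons, Matrix.cons_val_two, Matrix.cons_val_three, Matrix.tail_cons]
  · rw [relp, Finset.sum_filter, Fin.sum_univ_four]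
    norm_num [Matrix.cons_val_zero, Matrix.cons_val_one, Matrix.head_cons]
    simp [Matrix.vecHead, Matrix.vecTail, show (0:Fin 4) < 2 by decide,
      show (1:Fin 4) < 2 by decide, show ¬((3:Fin 4) < 2) by decide]
  · rw [relp, Finset.sum_filter, Fin.sum_univ_four]
    norm_num [Matrix.cons_val_zero, Matrix.cons_val_one, Matrix.head_cons]
    simp [Matrix.vecHead, Matrix.vecTail, show (0:Fin 4) < 3 by decide,
      show (1:Fin 4) < 3 by decide, show (2:Fin 4) < 3 by decide]

/-- The substitution corresponding to `Γ`. -/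
def Pcol (u v ε : F) : Fin 4 → MvPolynomial (Fin 4) F :=
  ![X 0, X 1, X 2, C ((u - v*ε)/2) * X 0 + C ((1-ε)/2) * X 1 + C ε * X 3]

lemma Pcol_zero (u v ε : F) : Pcol u v ε 0 = X 0 := rfl
lemma Pcol_one (u v ε : F) : Pcol u v ε 1 = X 1 := rfl
lemma Pcol_two (u v ε : F) : Pcol u v ε 2 = X 2 := rfl
lemma Pcol_three (u v ε : F) :
    Pcol u v ε 3 = C ((u - v*ε)/2) * X 0 + C ((1-ε)/2) * X 1 + C ε * X 3 := rfl

lemma key_mem (h2 : (2:F) ≠ 0) (u v ε : F) (huv : u = v * ε^2) :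
    ∀ i, (aeval (Pcol u v ε)) (relp !![(0:F),0,0,0; 0,0,0,0; 1,1,0,0; u,1,0,0] i)
      ∈ Ideal.span (relSet F !![(0:F),0,0,0; 0,0,0,0; 1,1,0,0; v,1,0,0]) := by
  obtain ⟨h0, h1, h2', h3⟩ := relp_explicit (F := F) u
  obtain ⟨g0, g1, g2', g3⟩ := relp_explicit (F := F) v
  have hA : (C ((u - v*ε)/2) : MvPolynomial (Fin 4) F) = C (2⁻¹:F) * (C u - C v * C ε) := by
    rw [div_eq_inv_mul, map_mul, map_sub, map_mul]
  have hB : (C ((1-ε)/2) : MvPolynomial (Fin 4) F) = C (2⁻¹:F) * (1 - C ε) := by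
    rw [div_eq_inv_mul, map_mul, map_sub, map_one]
  have hH : (C (2⁻¹:F) : MvPolynomial (Fin 4) F) * 2 = 1 := by
    rw [show (2 : MvPolynomial (Fin 4) F) = C (2:F) from (map_ofNat C 2).symm, ← map_mul,
      inv_mul_cancel₀ h2, map_one]
  have hU : (C u : MvPolynomial (Fin 4) F) = C v * C ε ^ 2 := by
    rw [huv, map_mul, map_pow]
  intro i
  fin_cases i
  · show (aeval (Pcol u v ε)) (relp _ 0) ∈ _
    rw [h0]
    simp only [map_pow, aeval_X, Pcol_zero]
    exact Ideal.subset_span ⟨0, g0.symm⟩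
  · show (aeval (Pcol u v ε)) (relp _ 1) ∈ _
    rw [h1]
    simp only [map_pow, aeval_X, Pcol_one]
    exact Ideal.subset_span ⟨1, g1.symm⟩
  · show (aeval (Pcol u v ε)) (relp _ 2) ∈ _
    rw [h2']
    simp only [map_sub, map_add, map_mul, map_pow, aeval_X, Pcol_zero, Pcol_one, Pcol_two]
    exact Ideal.subset_span ⟨2, g2'.symm⟩
  · show (aeval (Pcol u v ε)) (relp _ 3) ∈ _
    rw [h3]
    have key : (aeval (Pcol u v ε)) (X 3 ^ 2 - (C u * X 0 * X 3 + X 1 * X 3)) =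
        (C ((u - v*ε)/2) ^ 2 - C u * C ((u - v*ε)/2)) * relp !![(0:F),0,0,0; 0,0,0,0; 1,1,0,0; v,1,0,0] 0
        + (C ((1-ε)/2) ^ 2 - C ((1-ε)/2)) * relp !![(0:F),0,0,0; 0,0,0,0; 1,1,0,0; v,1,0,0] 1
        + C ε ^ 2 * relp !![(0:F),0,0,0; 0,0,0,0; 1,1,0,0; v,1,0,0] 3 := by
      rw [g0, g1, g3]
      simp only [map_sub, map_add, map_mul, map_pow, aeval_X, aeval_C,
        MvPolynomial.algebraMap_eq, Pcol_zero, Pcol_one, Pcol_three]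
      linear_combination
        ((2 * C ((1-ε)/2) - 1) * (X 0 * X 1) + 2 * C ε * (X 0 * X 3)) * hA
        + ((2 * C (2⁻¹:F) * (C u - C v * C ε) - C u) * (X 0 * X 1)
            + 2 * C ε * (X 1 * X 3)) * hB
        + (C (2⁻¹:F) * (C u - C v * C ε) * (1 - C ε) * (X 0 * X 1)
            + C ε * (C u - C v * C ε) * (X 0 * X 3) + C ε * (1 - C ε) * (X 1 * X 3)) * hH
        - (C (2⁻¹:F) * (X 0 * X 1)) * hU
    rw [key]
    refine Ideal.add_mem _ (Ideal.add_mem _ ?_ ?_) ?_ <;>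
      exact Ideal.mul_mem_left _ _ (Ideal.subset_span (relp_mem _ _))

lemma Pcol_comp (h2 : (2:F) ≠ 0) (u v ε : F) (hε : ε ≠ 0) :
    (aeval (Pcol u v ε)) (Pcol v u ε⁻¹ 3) = X 3 := by
  have e0 : (C ((v - u*ε⁻¹)/2) + C ε⁻¹ * C ((u - v*ε)/2) : MvPolynomial (Fin 4) F) = 0 := by
    rw [← map_mul, ← map_add, show (v - u*ε⁻¹)/2 + ε⁻¹ * ((u - v*ε)/2) = 0 from by
      field_simp; ring, map_zero]
  have e1 : (C ((1-ε⁻¹)/2) + C ε⁻¹ * C ((1-ε)/2) : MvPolynomial (Fin 4) F) = 0 := by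
    rw [← map_mul, ← map_add, show (1-ε⁻¹)/2 + ε⁻¹ * ((1-ε)/2) = 0 from by
      field_simp; ring, map_zero]
  have e3 : (C ε⁻¹ * C ε : MvPolynomial (Fin 4) F) = 1 := by
    rw [← map_mul, inv_mul_cancel₀ hε, map_one]
  rw [Pcol_three]
  simp only [map_add, map_mul, aeval_X, aeval_C, MvPolynomial.algebraMap_eq,
    Pcol_zero, Pcol_one, Pcol_three]
  linear_combination (X 0 : MvPolynomial (Fin 4) F) * e0 + (X 1 : MvPolynomial (Fin 4) F) * e1
    + (X 3 : MvPolynomial (Fin 4) F) * e3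

set_option maxHeartbeats 1600000 in
set_option synthInstance.maxHeartbeats 400000 in
/-- The explicit matrix `Γ` satisfies the key equations and hence defines a graded
isomorphism `A(T) → A(S)`, where the last rows of `T`, `S` are `(u,1,0,0)`, `(v,1,0,0)`
and `u/v = ε²`. -/
theorem stmt12 (h2 : (2 : F) ≠ 0) (u v ε : F) (hu : u ≠ 0) (hv : v ≠ 0)
    (hε : u / v = ε ^ 2) :
    KeyEq F
        !![(0:F),0,0,0; 0,0,0,0; 1,1,0,0; u,1,0,0]
        !![(0:F),0,0,0; 0,0,0,0; 1,1,0,0; v,1,0,0]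
        !![(1:F), 0, 0, (u - v*ε)/2; 0, 1, 0, (1-ε)/2; 0, 0, 1, 0; 0, 0, 0, ε] ∧
    ∃ e : NTAlg F !![(0:F),0,0,0; 0,0,0,0; 1,1,0,0; u,1,0,0] ≃ₐ[F]
          NTAlg F !![(0:F),0,0,0; 0,0,0,0; 1,1,0,0; v,1,0,0],
      (∀ j : Fin 4, e (NTgen F !![(0:F),0,0,0; 0,0,0,0; 1,1,0,0; u,1,0,0] j) =
        ∑ i : Fin 4,
          !![(1:F), 0, 0, (u - v*ε)/2; 0, 1, 0, (1-ε)/2; 0, 0, 1, 0; 0, 0, 0, ε] i j •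
            NTgen F !![(0:F),0,0,0; 0,0,0,0; 1,1,0,0; v,1,0,0] i) ∧
      IsGradedIso F e := by
  have huv : u = v * ε ^ 2 := by
    rw [(div_eq_iff hv).mp hε]; ring
  have hε0 : ε ≠ 0 := by
    intro h
    rw [h] at huv
    simp at huv
    exact hu huv
  have hvu : v = u * (ε⁻¹) ^ 2 := by
    rw [huv]; field_simp
  constructor
  · -- KeyEq
    intro r i k hik
    subst huv
    fin_cases r <;> fin_cases i <;> fin_cases k <;>
      first
        | exact absurd hik (by decide)
        | (rw [Finset.sum_filter, Fin.sum_univ_four]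
           norm_num [Matrix.cons_val_zero, Matrix.cons_val_one, Matrix.head_cons,
             Matrix.vecHead, Matrix.vecTail, Fin.lt_def, Matrix.cons_val_two, Matrix.cons_val_three, Matrix.tail_cons]
           try first
             | rfl
             | ring1
             | linear_combination (ε - ε^2) * (inv_mul_cancel₀ h2)
             | linear_combination (v*ε^3 - v*ε^2) * (inv_mul_cancel₀ h2)
             | linear_combination (2*v*ε^2*2⁻¹ - v*ε*2⁻¹ - v*ε^3*2⁻¹) * (inv_mul_cancel₀ h2))
  · -- the isomorphism
    have hp := key_mem h2 u v ε huv
    have hq := key_mem h2 v u ε⁻¹ hvu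
    set T := !![(0:F),0,0,0; 0,0,0,0; 1,1,0,0; u,1,0,0] with hT
    set S := !![(0:F),0,0,0; 0,0,0,0; 1,1,0,0; v,1,0,0] with hS
    set f := NTlift T S (Pcol u v ε) hp with hf
    set g := NTlift S T (Pcol v u ε⁻¹) hq with hg
    have hfg : f.comp g = AlgHom.id F (NTAlg F S) := by
      apply Ideal.Quotient.algHom_ext
      apply MvPolynomial.algHom_ext
      intro i
      simp only [AlgHom.coe_comp, Function.comp_apply, Ideal.Quotient.mkₐ_eq_mk, AlgHom.coe_id,
        id_eq]
      fin_cases i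
      · show f (g (NTgen F S 0)) = NTgen F S 0
        rw [hg, NTlift_gen, Pcol_zero, hf, NTlift_mk, aeval_X, Pcol_zero]; rfl
      · show f (g (NTgen F S 1)) = NTgen F S 1
        rw [hg, NTlift_gen, Pcol_one, hf, NTlift_mk, aeval_X, Pcol_one]; rfl
      · show f (g (NTgen F S 2)) = NTgen F S 2
        rw [hg, NTlift_gen, Pcol_two, hf, NTlift_mk, aeval_X, Pcol_two]; rfl
      · show f (g (NTgen F S 3)) = NTgen F S 3
        rw [hg, NTlift_gen, hf, NTlift_mk, Pcol_comp h2 u v ε hε0]; rfl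
    have hgf : g.comp f = AlgHom.id F (NTAlg F T) := by
      apply Ideal.Quotient.algHom_ext
      apply MvPolynomial.algHom_ext
      intro i
      simp only [AlgHom.coe_comp, Function.comp_apply, Ideal.Quotient.mkₐ_eq_mk, AlgHom.coe_id,
        id_eq]
      fin_cases i
      · show g (f (NTgen F T 0)) = NTgen F T 0
        rw [hf, NTlift_gen, Pcol_zero, hg, NTlift_mk, aeval_X, Pcol_zero]; rfl
      · show g (f (NTgen F T 1)) = NTgen F T 1
        rw [hf, NTlift_gen, Pcol_one, hg, NTlift_mk, aeval_X, Pcol_one]; rfl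
      · show g (f (NTgen F T 2)) = NTgen F T 2
        rw [hf, NTlift_gen, Pcol_two, hg, NTlift_mk, aeval_X, Pcol_two]; rfl
      · have hcomp := Pcol_comp h2 v u ε⁻¹ (inv_ne_zero hε0)
        rw [inv_inv] at hcomp
        show g (f (NTgen F T 3)) = NTgen F T 3
        rw [hf, NTlift_gen, hg, NTlift_mk, hcomp]; rfl
    refine ⟨AlgEquiv.ofAlgHom f g hfg hgf, ?_, ?_, ?_⟩
    · -- formula for e on generators
      intro j
      show f (NTgen F T j) = _
      rw [hf, NTlift_gen, Fin.sum_univ_four]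
      fin_cases j
      · norm_num [Matrix.cons_val_zero, Matrix.cons_val_one, Matrix.head_cons,
          Matrix.vecHead, Matrix.vecTail, Matrix.cons_val_two, Matrix.cons_val_three, Matrix.tail_cons, Pcol_zero]
        rfl
      · norm_num [Matrix.cons_val_zero, Matrix.cons_val_one, Matrix.head_cons,
          Matrix.vecHead, Matrix.vecTail, Matrix.cons_val_two, Matrix.cons_val_three, Matrix.tail_cons, Pcol_one]
        rfl
      · norm_num [Matrix.cons_val_zero, Matrix.cons_val_one, Matrix.head_cons,
          Matrix.vecHead, Matrix.vecTail, Matrix.cons_val_two, Matrix.cons_val_three, Matrix.tail_cons, Pcol_two]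
        rfl
      · norm_num [Matrix.cons_val_zero, Matrix.cons_val_one, Matrix.head_cons,
          Matrix.vecHead, Matrix.vecTail, Matrix.cons_val_two, Matrix.cons_val_three, Matrix.tail_cons, Pcol_three]
        rw [show NTgen F S 0 = Ideal.Quotient.mk _ (X 0) from rfl,
          show NTgen F S 1 = Ideal.Quotient.mk _ (X 1) from rfl,
          show NTgen F S 3 = Ideal.Quotient.mk _ (X 3) from rfl,
          smul_mk, smul_mk, smul_mk]
        rfl
    · -- graded, forward
      intro j
      show f (NTgen F T j) ∈ _
      rw [hf, NTlift_gen]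
      fin_cases j
      · exact Submodule.subset_span ⟨0, rfl⟩
      · exact Submodule.subset_span ⟨1, rfl⟩
      · exact Submodule.subset_span ⟨2, rfl⟩
      · show Ideal.Quotient.mk (Ideal.span (relSet F S))
            (C ((u - v*ε)/2) * X 0 + C ((1-ε)/2) * X 1 + C ε * X 3) ∈ _
        rw [map_add, map_add]
        refine Submodule.add_mem _ (Submodule.add_mem _ ?_ ?_) ?_ <;>
          · rw [← smul_mk]
            exact Submodule.smul_mem _ _ (Submodule.subset_span ⟨_, rfl⟩)
    · -- graded, backward
      intro j
      show g (NTgen F S j) ∈ _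
      rw [hg, NTlift_gen]
      fin_cases j
      · exact Submodule.subset_span ⟨0, rfl⟩
      · exact Submodule.subset_span ⟨1, rfl⟩
      · exact Submodule.subset_span ⟨2, rfl⟩
      · show Ideal.Quotient.mk (Ideal.span (relSet F T))
            (C ((v - u*ε⁻¹)/2) * X 0 + C ((1-ε⁻¹)/2) * X 1 + C ε⁻¹ * X 3) ∈ _
        rw [map_add, map_add]
        refine Submodule.add_mem _ (Submodule.add_mem _ ?_ ?_) ?_ <;>
          · rw [← smul_mk]
            exact Submodule.smul_mem _ _ (Submodule.subset_span ⟨_, rfl⟩)
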